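/- Let r be a negative irrational real number. Then the set {a + b·r : a, b ∈ ℕ} is dense in ℝ. -/
import Mathlib


/-- If `r` is a negative irrational real number, then `{a + b·r : a, b ∈ ℕ}` is dense
in `ℝ`. -/
theorem dense_nat_add_nat_mul_irrational_neg (r : ℝ) (hirr : Irrational r) (hneg : r < 0) :
    Dense {x : ℝ | ∃ a b : ℕ, x = (a : ℝ) + (b : ℝ) * r} := by
  set S : AddSubgroup ℝ :=
    { carrier := {x : ℝ | ∃ m n : ℤ, x = (m : ℝ) + (n : ℝ) * r}
      zero_mem' := ⟨0, 0, by simp⟩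
      add_mem' := by
        rintro x y ⟨m, n, rfl⟩ ⟨m', n', rfl⟩
        exact ⟨m + m', n + n', by push_cast; ring⟩
      neg_mem' := by
        rintro x ⟨m, n, rfl⟩
        exact ⟨-m, -n, by push_cast; ring⟩ } with hSdef
  have hdense : Dense (S : Set ℝ) := by
    rcases S.dense_or_cyclic with h | ⟨a, ha⟩
    · exact h
    · exfalso
      have h1 : (1 : ℝ) ∈ S := ⟨1, 0, by simp⟩
      have hr : r ∈ S := ⟨0, 1, by simp⟩
      rw [ha, AddSubgroup.mem_closure_singleton] at h1 hr
      obtain ⟨k, hk⟩ := h1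
      obtain ⟨l, hl⟩ := hr
      rw [zsmul_eq_mul] at hk hl
      have hk0 : (k : ℝ) ≠ 0 := by
        intro h; rw [h, zero_mul] at hk; exact one_ne_zero hk.symm
      have hkr : (k : ℝ) * r = l := by
        rw [← hl, mul_left_comm, hk, mul_one]
      refine hirr ⟨(l : ℚ) / (k : ℚ), ?_⟩
      have hrval : r = (l : ℝ) / (k : ℝ) := by field_simp; linarith [hkr]
      have hkq : ((k : ℚ) : ℝ) ≠ 0 := by push_cast; exact hk0
      rw [hrval]; push_cast; ring
  rw [Metric.dense_iff]
  intro x ε hε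
  set ε' : ℝ := min ε (min 1 (-r)) with hε'def
  have hε' : 0 < ε' := lt_min hε (lt_min one_pos (by linarith))
  have hε'ε : ε' ≤ ε := min_le_left _ _
  have hε'1 : ε' ≤ 1 := (min_le_right _ _).trans (min_le_left _ _)
  have hε'r : ε' ≤ -r := (min_le_right _ _).trans (min_le_right _ _)
  obtain ⟨g, hgS, hg⟩ := hdense.exists_mem_open isOpen_Ioo
    (Set.nonempty_Ioo.2 hε')
  obtain ⟨m, n, rfl⟩ := hgS
  obtain ⟨hg0, hgε⟩ := hg
  have hn : n ≠ 0 := by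
    rintro rfl
    simp only [Int.cast_zero, zero_mul, add_zero] at hg0 hgε
    have h1 : (1 : ℤ) ≤ m := by exact_mod_cast hg0
    have : (1 : ℝ) ≤ (m : ℝ) := by exact_mod_cast h1
    linarith
  -- produce a nonzero element e = a0 + b0 * r with nat coefficients and |e| < ε
  have key : ∃ (a0 b0 : ℕ) (e : ℝ), e = (a0 : ℝ) + (b0 : ℝ) * r ∧ e ≠ 0 ∧ |e| < ε := by
    rcases hn.lt_or_gt with hnneg | hnpos
    · -- n < 0 : use e = -g
      have hn1' : n ≤ -1 := by omega
      have hn1 : (n : ℝ) ≤ -1 := by exact_mod_cast hn1'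
      have hnr : (-n : ℝ) * r ≤ 1 * r :=
        mul_le_mul_of_nonpos_right (by linarith : (1 : ℝ) ≤ -(n : ℝ)) hneg.le
      have hm : (0 : ℝ) < ((-m : ℤ) : ℝ) := by push_cast; nlinarith
      refine ⟨(-m).toNat, (-n).toNat, -((m : ℝ) + (n : ℝ) * r), ?_,
        ne_of_lt (by linarith), ?_⟩
      · have h1 : (((-m).toNat : ℤ) : ℝ) = ((-m : ℤ) : ℝ) := by
          rw [Int.toNat_of_nonneg (by exact_mod_cast hm.le)]
        have h2 : (((-n).toNat : ℤ) : ℝ) = ((-n : ℤ) : ℝ) := by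
          rw [Int.toNat_of_nonneg (by omega)]
        push_cast at h1 h2 ⊢
        rw [h1, h2]; push_cast; ring
      · rw [abs_of_neg (by linarith)]; simpa using lt_of_lt_of_le hgε hε'ε
    · -- n > 0 : use e = g
      have hn1 : (1 : ℝ) ≤ (n : ℝ) := by exact_mod_cast hnpos
      have hm : (0 : ℝ) ≤ (m : ℝ) := by nlinarith
      refine ⟨m.toNat, n.toNat, (m : ℝ) + (n : ℝ) * r, ?_,
        ne_of_gt hg0, ?_⟩
      · have h1 : ((m.toNat : ℤ) : ℝ) = (m : ℝ) := by
          rw [Int.toNat_of_nonneg (by exact_mod_cast hm)]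
        have h2 : ((n.toNat : ℤ) : ℝ) = (n : ℝ) := by
          rw [Int.toNat_of_nonneg hnpos.le]
        push_cast at h1 h2 ⊢
        rw [h1, h2]
      · rw [abs_of_pos hg0]; exact lt_of_lt_of_le hgε hε'ε
  obtain ⟨a0, b0, e, he, he0, heε⟩ := key
  rw [abs_lt] at heε
  rcases he0.lt_or_gt with heneg | hepos
  · -- e < 0 : shift right by a natural number A ≥ x, then step down with e
    obtain ⟨A, hA⟩ := exists_nat_ge x
    set y : ℝ := x - A with hy
    have hy0 : y ≤ 0 := by rw [hy]; linarith
    have hdiv : 0 ≤ y / e := div_nonneg_of_nonpos hy0 heneg.le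
    set k : ℕ := ⌊y / e⌋.toNat with hk
    have hkc : (k : ℝ) = (⌊y / e⌋ : ℝ) := by
      exact_mod_cast congrArg (Int.cast : ℤ → ℝ)
        (Int.toNat_of_nonneg (Int.floor_nonneg.2 hdiv))
    have h1 : (k : ℝ) ≤ y / e := by rw [hkc]; exact Int.floor_le _
    have h2 : y / e < k + 1 := by rw [hkc]; exact Int.lt_floor_add_one _
    have hke : y ≤ (k : ℝ) * e := by
      have := mul_le_mul_of_nonpos_right h1 heneg.le
      rwa [div_mul_cancel₀ _ (ne_of_lt heneg)] at this
    have hke2 : ((k : ℝ) + 1) * e < y := by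
      have := mul_lt_mul_of_neg_right h2 heneg
      rwa [div_mul_cancel₀ _ (ne_of_lt heneg)] at this
    refine ⟨((A + k * a0 : ℕ) : ℝ) + ((k * b0 : ℕ) : ℝ) * r, ?_, A + k * a0, k * b0, rfl⟩
    rw [Metric.mem_ball, Real.dist_eq]
    have hval : ((A + k * a0 : ℕ) : ℝ) + ((k * b0 : ℕ) : ℝ) * r = A + k * e := by
      push_cast; rw [he]; ring
    have hyk : x - ((A : ℝ) + k * e) = y - k * e := by rw [hy]; ring
    rw [hval, abs_sub_comm, abs_lt, hyk]
    constructor <;> linarith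
  · -- e > 0 : shift left by B * r (B * r ≤ x), then step up with e
    obtain ⟨B, hB⟩ := exists_nat_ge (x / r)
    have hBr : (B : ℝ) * r ≤ x := by
      rwa [div_le_iff_of_neg hneg] at hB
    set y : ℝ := x - B * r with hy
    have hy0 : 0 ≤ y := by rw [hy]; linarith
    have hdiv : 0 ≤ y / e := div_nonneg hy0 hepos.le
    set k : ℕ := ⌊y / e⌋.toNat with hk
    have hkc : (k : ℝ) = (⌊y / e⌋ : ℝ) := by
      exact_mod_cast congrArg (Int.cast : ℤ → ℝ)
        (Int.toNat_of_nonneg (Int.floor_nonneg.2 hdiv))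
    have h1 : (k : ℝ) ≤ y / e := by rw [hkc]; exact Int.floor_le _
    have h2 : y / e < k + 1 := by rw [hkc]; exact Int.lt_floor_add_one _
    have hke : (k : ℝ) * e ≤ y := by
      have := mul_le_mul_of_nonneg_right h1 hepos.le
      rwa [div_mul_cancel₀ _ (ne_of_gt hepos)] at this
    have hke2 : y < ((k : ℝ) + 1) * e := by
      have := mul_lt_mul_of_pos_right h2 hepos
      rwa [div_mul_cancel₀ _ (ne_of_gt hepos)] at this
    refine ⟨((k * a0 : ℕ) : ℝ) + ((k * b0 + B : ℕ) : ℝ) * r, ?_, k * a0, k * b0 + B, rfl⟩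
    rw [Metric.mem_ball, Real.dist_eq]
    have hval : ((k * a0 : ℕ) : ℝ) + ((k * b0 + B : ℕ) : ℝ) * r = k * e + B * r := by
      push_cast; rw [he]; ring
    have hyk : x - ((k : ℝ) * e + B * r) = y - k * e := by rw [hy]; ring
    rw [hval, abs_sub_comm, abs_lt, hyk]
    constructor <;> linarith
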